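/- Let k be a field and q ∈ k nonzero. For every n ∈ ℕ, in the algebra A₁^q the element (X+Y+Z₁)ⁿ − q^{n(n+1)/2} Σ_{i,j ≥ 0, i+2j ≤ n} c^{(n)}_{ij} q^{j + i(i−1)/2 − ni} Xⁱ Z₂ʲ Z₁^{n−i−2j} lies in the left ideal A₁^q·Y generated by Y, where c^{(n)}_{ij} ∈ k denotes the coefficient of xⁱzʲ in the polynomial p_n ∈ k[x,z]. -/

import Mathlib

noncomputable section

variable (k : Type*) [Field k]

/-- The defining relations of the quantum Weyl algebra `A₁^q`, on the free algebra
with generators `0 = X`, `1 = Y`, `2 = Z₁`, `3 = Z₂`: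
`YX = q⁻¹XY + Z₂`, `Z_iY = qⁱYZ_i`, `Z_iX = q^{−i}XZ_i` (i = 1,2), `Z₁Z₂ = Z₂Z₁`. -/
inductive WeylRel (q : kˣ) : FreeAlgebra k (Fin 4) → FreeAlgebra k (Fin 4) → Prop
  | yx : WeylRel q (FreeAlgebra.ι k 1 * FreeAlgebra.ι k 0)
      (((q⁻¹ : kˣ) : k) • (FreeAlgebra.ι k 0 * FreeAlgebra.ι k 1) + FreeAlgebra.ι k 3)
  | z1y : WeylRel q (FreeAlgebra.ι k 2 * FreeAlgebra.ι k 1)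
      ((q : k) • (FreeAlgebra.ι k 1 * FreeAlgebra.ι k 2))
  | z2y : WeylRel q (FreeAlgebra.ι k 3 * FreeAlgebra.ι k 1)
      (((q : k) ^ 2) • (FreeAlgebra.ι k 1 * FreeAlgebra.ι k 3))
  | z1x : WeylRel q (FreeAlgebra.ι k 2 * FreeAlgebra.ι k 0)
      (((q⁻¹ : kˣ) : k) • (FreeAlgebra.ι k 0 * FreeAlgebra.ι k 2))
  | z2x : WeylRel q (FreeAlgebra.ι k 3 * FreeAlgebra.ι k 0)
      ((((q⁻¹ : kˣ) : k) ^ 2) • (FreeAlgebra.ι k 0 * FreeAlgebra.ι k 3))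
  | z1z2 : WeylRel q (FreeAlgebra.ι k 2 * FreeAlgebra.ι k 3)
      (FreeAlgebra.ι k 3 * FreeAlgebra.ι k 2)

/-- The quantum Weyl algebra `A₁^q`. -/
def WeylAlg (q : kˣ) : Type _ := RingQuot (WeylRel k q)

instance (q : kˣ) : Ring (WeylAlg k q) := inferInstanceAs (Ring (RingQuot (WeylRel k q)))
instance (q : kˣ) : Algebra k (WeylAlg k q) := inferInstanceAs (Algebra k (RingQuot (WeylRel k q)))

/-- The generator `X` of `A₁^q`. -/
def Wx (q : kˣ) : WeylAlg k q := RingQuot.mkAlgHom k (WeylRel k q) (FreeAlgebra.ι k 0)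
/-- The generator `Y` of `A₁^q`. -/
def Wy (q : kˣ) : WeylAlg k q := RingQuot.mkAlgHom k (WeylRel k q) (FreeAlgebra.ι k 1)
/-- The generator `Z₁` of `A₁^q`. -/
def Wz1 (q : kˣ) : WeylAlg k q := RingQuot.mkAlgHom k (WeylRel k q) (FreeAlgebra.ι k 2)
/-- The generator `Z₂` of `A₁^q`. -/
def Wz2 (q : kˣ) : WeylAlg k q := RingQuot.mkAlgHom k (WeylRel k q) (FreeAlgebra.ι k 3)

/-- The `k[z]`-linear `q`-derivative in `x` on `k[z][x]`, determined by
`D_q(xⁿ) = [n]_q x^(n−1)`. -/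
def qDeriv2 (q : k) (p : Polynomial (Polynomial k)) : Polynomial (Polynomial k) :=
  p.sum fun n c =>
    Polynomial.C (c * Polynomial.C (∑ i ∈ Finset.range n, q ^ i)) * Polynomial.X ^ (n - 1)

/-- The recursively defined polynomials `p₀ = 1`,
`p_n = x·p_{n−1} + z q^{−2n} D_q(p_{n−1}) + q^{−n} p_{n−1}` in `k[z][x]`
(outer variable `x`, inner variable `z`). -/
def pseq2 (q : kˣ) : ℕ → Polynomial (Polynomial k)
  | 0 => 1
  | n + 1 =>
      Polynomial.X * pseq2 q n +
        Polynomial.C ((((q⁻¹ : kˣ) : k) ^ (2 * (n + 1))) • (Polynomial.X : Polynomial k)) *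
          qDeriv2 k (q : k) (pseq2 q n) +
        Polynomial.C (Polynomial.C (((q⁻¹ : kˣ) : k) ^ (n + 1))) * pseq2 q n

end

noncomputable section
namespace WeylAux
open Polynomial
variable {k : Type*} [Field k] (q : kˣ)

/-- `u q e = q^e` as an element of `k`. -/
def u (e : ℤ) : k := ((q ^ e : kˣ) : k)

lemma u_add (a b : ℤ) : u q (a + b) = u q a * u q b := by
  simp [u, zpow_add]

lemma u_natCast (s : ℕ) : u q (s : ℤ) = (q : k) ^ s := by
  simp [u, zpow_natCast]

lemma u_zero : u q 0 = 1 := by simp [u]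

lemma u_neg_one : u q (-1) = ((q⁻¹ : kˣ) : k) := by simp [u]

lemma u_mul_qpow : u q (-1) * (q : k) = 1 := by
  simp [u]

lemma u_neg_natCast (s : ℕ) : u q (-(s : ℤ)) = ((q⁻¹ : kˣ) : k) ^ s := by
  simp [u, zpow_neg, ← inv_pow]

variable (k) in
/-- The left ideal generated by `Y`. -/
def I : Ideal (WeylAlg k q) := Ideal.span {Wy k q}

lemma smul_mem_I (r : k) {x : WeylAlg k q} (hx : x ∈ I k q) : r • x ∈ I k q := by
  rw [Algebra.smul_def]
  exact Ideal.mul_mem_left _ _ hx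

lemma mul_Wy_mem (a : WeylAlg k q) : a * Wy k q ∈ I k q :=
  Ideal.mul_mem_left _ _ (Ideal.subset_span rfl)

-- the six relations
lemma rel_yx : Wy k q * Wx k q = u q (-1) • (Wx k q * Wy k q) + Wz2 k q := by
  have h := RingQuot.mkAlgHom_rel k (WeylRel.yx (k := k) (q := q))
  simp [Wx, Wy, Wz2, u_neg_one, map_mul, map_add] at h ⊢; exact h

lemma rel_z1y : Wz1 k q * Wy k q = (q : k) • (Wy k q * Wz1 k q) := by
  have h := RingQuot.mkAlgHom_rel k (WeylRel.z1y (k := k) (q := q))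
  simp [Wy, Wz1, map_mul] at h ⊢; exact h

lemma rel_z2y : Wz2 k q * Wy k q = ((q : k) ^ 2) • (Wy k q * Wz2 k q) := by
  have h := RingQuot.mkAlgHom_rel k (WeylRel.z2y (k := k) (q := q))
  simp [Wy, Wz2, map_mul] at h ⊢; exact h

lemma rel_z1x : Wz1 k q * Wx k q = u q (-1) • (Wx k q * Wz1 k q) := by
  have h := RingQuot.mkAlgHom_rel k (WeylRel.z1x (k := k) (q := q))
  simp [Wx, Wz1, u_neg_one, map_mul] at h ⊢; exact h

lemma rel_z2x : Wz2 k q * Wx k q = (u q (-1) ^ 2) • (Wx k q * Wz2 k q) := by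
  have h := RingQuot.mkAlgHom_rel k (WeylRel.z2x (k := k) (q := q))
  simp [Wx, Wz2, u_neg_one, map_mul] at h ⊢; exact h

lemma rel_z1z2 : Wz1 k q * Wz2 k q = Wz2 k q * Wz1 k q := by
  have h := RingQuot.mkAlgHom_rel k (WeylRel.z1z2 (k := k) (q := q))
  simp [Wz1, Wz2, map_mul] at h ⊢; exact h

end WeylAux
end

noncomputable section
namespace WeylAux
open Polynomial
variable {k : Type*} [Field k] (q : kˣ)

lemma u_pow (e : ℤ) (i : ℕ) : (u q e : k) ^ i = u q (e * i) := by
  simp [u, ← zpow_natCast, ← zpow_mul]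

lemma pow_comm_of {a b : WeylAlg k q} {c : k} (h : a * b = c • (b * a)) (i : ℕ) :
    a * b ^ i = c ^ i • (b ^ i * a) := by
  induction i with
  | zero => simp
  | succ i ih =>
      rw [pow_succ, ← mul_assoc, ih, smul_mul_assoc, mul_assoc, h, mul_smul_comm, smul_smul,
        pow_succ, ← mul_assoc]

lemma flip_rel {a b : WeylAlg k q} {c c' : k} (h : a * b = c • (b * a)) (hc : c' * c = 1) :
    b * a = c' • (a * b) := by
  rw [h, smul_smul, hc, one_smul]

lemma z1_x_pow (i : ℕ) : Wz1 k q * Wx k q ^ i = u q (-(i : ℤ)) • (Wx k q ^ i * Wz1 k q) := by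
  rw [pow_comm_of q (rel_z1x q), u_pow, show (-1 * (i : ℤ)) = -(i : ℤ) by ring]

lemma z2_x_pow (i : ℕ) : Wz2 k q * Wx k q ^ i = u q (-(2 * i : ℤ)) • (Wx k q ^ i * Wz2 k q) := by
  rw [pow_comm_of q (rel_z2x q), ← pow_mul, u_pow,
    show (-1 * ((2 * i : ℕ) : ℤ)) = -(2 * i : ℤ) by push_cast; ring]

lemma y_z2 : Wy k q * Wz2 k q = u q (-2) • (Wz2 k q * Wy k q) := by
  refine flip_rel q (rel_z2y q) ?_
  have h : ((q : k) ^ 2) = u q 2 := (u_natCast q 2).symm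
  rw [h, ← u_add]
  simpa using u_zero q

lemma y_z1 : Wy k q * Wz1 k q = u q (-1) • (Wz1 k q * Wy k q) := by
  refine flip_rel q (rel_z1y q) ?_
  have h : (q : k) = u q 1 := by simp [u]
  rw [h, ← u_add]
  simpa using u_zero q

lemma y_z2_pow (j : ℕ) : Wy k q * Wz2 k q ^ j = u q (-(2 * j : ℤ)) • (Wz2 k q ^ j * Wy k q) := by
  rw [pow_comm_of q (y_z2 q), u_pow, show ((-2 : ℤ) * (j : ℤ)) = -(2 * j : ℤ) by ring]

lemma y_z1_pow (m : ℕ) : Wy k q * Wz1 k q ^ m = u q (-(m : ℤ)) • (Wz1 k q ^ m * Wy k q) := by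
  rw [pow_comm_of q (y_z1 q), u_pow, show (-1 * (m : ℤ)) = -(m : ℤ) by ring]

lemma z1_z2_pow (j : ℕ) : Wz1 k q * Wz2 k q ^ j = Wz2 k q ^ j * Wz1 k q := by
  have h : Wz1 k q * Wz2 k q = (1 : k) • (Wz2 k q * Wz1 k q) := by
    rw [one_smul, rel_z1z2]
  simpa using pow_comm_of q h j

/-- `E q i = Σ_{s<i} q^(s+2-2i)`, the coefficient appearing in `Y Xⁱ`. -/
def E (i : ℕ) : k := ∑ s ∈ Finset.range i, u q ((s : ℤ) + 2 - 2 * i)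

lemma E_zero : E q 0 = 0 := by simp [E]

lemma E_succ (i : ℕ) : E q (i + 1) = u q (-(2 * i : ℤ)) + u q (-1) * E q i := by
  rw [E, E, Finset.sum_range_succ', Finset.mul_sum]
  rw [add_comm]
  congr 1
  · congr 1
    push_cast
    ring
  · apply Finset.sum_congr rfl
    intro s _
    rw [← u_add]
    congr 1
    push_cast
    ring

lemma y_x_pow_succ (i : ℕ) : Wy k q * Wx k q ^ (i + 1) =
    u q (-(i + 1 : ℤ)) • (Wx k q ^ (i + 1) * Wy k q) + E q (i + 1) • (Wx k q ^ i * Wz2 k q) := by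
  induction i with
  | zero =>
      have hE : E q 1 = 1 := by rw [E]; norm_num [u]
      rw [zero_add, pow_one, rel_yx, pow_zero, one_mul, hE, one_smul]
      norm_num
  | succ i ih =>
      rw [pow_succ', ← mul_assoc, rel_yx, add_mul, smul_mul_assoc, mul_assoc, ih, z2_x_pow]
      rw [mul_add, mul_smul_comm, mul_smul_comm, smul_add, smul_smul, smul_smul]
      rw [← mul_assoc, ← pow_succ', ← mul_assoc, ← pow_succ']
      rw [E_succ q (i + 1), ← u_add,
        show (-1 + -((i : ℤ) + 1)) = -(((i + 1 : ℕ) : ℤ) + 1) by push_cast; ring]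
      rw [add_assoc]
      congr 1
      rw [add_smul]
      exact add_comm _ _

lemma y_x_pow (i : ℕ) : Wy k q * Wx k q ^ i =
    u q (-(i : ℤ)) • (Wx k q ^ i * Wy k q) + E q i • (Wx k q ^ (i - 1) * Wz2 k q) := by
  cases i with
  | zero => simp [E_zero, u_zero]
  | succ i => simpa using y_x_pow_succ q i

end WeylAux
end

noncomputable section
namespace WeylAux
open Polynomial
variable {k : Type*} [Field k] (q : kˣ)

/-- The normal-form monomial `Xⁱ Z₂ʲ Z₁^(n-i-2j)`. -/
def Mn (n i j : ℕ) : WeylAlg k q := Wx k q ^ i * Wz2 k q ^ j * Wz1 k q ^ (n - (i + 2 * j))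

/-- The exponent `n(n+1)/2 + j + i(i-1)/2 - ni`. -/
def βe (n i j : ℕ) : ℤ :=
  ((n * (n + 1) / 2 : ℕ) : ℤ) + (j : ℤ) + ((i * (i - 1) / 2 : ℕ) : ℤ) - (n : ℤ) * (i : ℤ)

/-- The normal-form image of a polynomial. -/
def Θ (n : ℕ) (p : Polynomial (Polynomial k)) : WeylAlg k q :=
  p.sum fun i g => g.sum fun j c => (c * u q (βe n i j)) • Mn q n i j

/-- One step of the `pseq2` recursion. -/
def stepQ (n : ℕ) (p : Polynomial (Polynomial k)) : Polynomial (Polynomial k) :=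
  Polynomial.X * p +
    Polynomial.C ((((q⁻¹ : kˣ) : k) ^ (2 * (n + 1))) • (Polynomial.X : Polynomial k)) *
      qDeriv2 k (q : k) p +
    Polynomial.C (Polynomial.C (((q⁻¹ : kˣ) : k) ^ (n + 1))) * p

lemma pseq2_succ (n : ℕ) : pseq2 k q (n + 1) = stepQ q n (pseq2 k q n) := rfl

lemma Θ_zero (n : ℕ) : Θ q n (0 : Polynomial (Polynomial k)) = 0 :=
  Polynomial.sum_zero_index _

lemma Θ_add (n : ℕ) (p r : Polynomial (Polynomial k)) :
    Θ q n (p + r) = Θ q n p + Θ q n r := by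
  refine Polynomial.sum_add_index p r _ (fun i => Polynomial.sum_zero_index _) ?_
  intro a b₁ b₂
  refine Polynomial.sum_add_index b₁ b₂ _ (fun j => by simp) ?_
  intro a' c₁ c₂
  rw [add_mul, add_smul]

lemma Θ_monomial (n i j : ℕ) (c : k) :
    Θ q n (monomial i (monomial j c)) = (c * u q (βe n i j)) • Mn q n i j := by
  rw [Θ, Polynomial.sum_monomial_index _ _ (Polynomial.sum_zero_index _),
    Polynomial.sum_monomial_index _ _ (by simp)]

lemma qDeriv2_monomial (i : ℕ) (g : Polynomial k) :
    qDeriv2 k (q : k) (monomial i g) =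
      monomial (i - 1) (g * Polynomial.C (∑ s ∈ Finset.range i, (q : k) ^ s)) := by
  rw [qDeriv2, Polynomial.sum_monomial_index _ _ (by simp), Polynomial.C_mul_X_pow_eq_monomial]

lemma stepQ_monomial (n i j : ℕ) (c : k) :
    stepQ q n (monomial i (monomial j c)) =
      monomial (i + 1) (monomial j c) +
        monomial (i - 1) (monomial (j + 1)
          ((((q⁻¹ : kˣ) : k) ^ (2 * (n + 1))) * (c * ∑ s ∈ Finset.range i, (q : k) ^ s))) +
        monomial i (monomial j ((((q⁻¹ : kˣ) : k) ^ (n + 1)) * c)) := by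
  rw [stepQ, qDeriv2_monomial, X_mul_monomial, C_mul_monomial, C_mul_monomial,
    monomial_mul_C, C_mul_monomial]
  congr 3
  · rw [smul_mul_assoc, X_mul_monomial, smul_monomial, smul_eq_mul]

end WeylAux
end

noncomputable section
namespace WeylAux
open Polynomial
variable {k : Type*} [Field k] (q : kˣ)

lemma y_x_pow' (i : ℕ) (w : WeylAlg k q) : Wy k q * (Wx k q ^ i * w) =
    u q (-(i : ℤ)) • (Wx k q ^ i * (Wy k q * w)) +
      E q i • (Wx k q ^ (i - 1) * (Wz2 k q * w)) := by
  rw [← mul_assoc, y_x_pow, add_mul, smul_mul_assoc, smul_mul_assoc, mul_assoc, mul_assoc]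

lemma y_z2_pow' (j : ℕ) (w : WeylAlg k q) : Wy k q * (Wz2 k q ^ j * w) =
    u q (-(2 * j : ℤ)) • (Wz2 k q ^ j * (Wy k q * w)) := by
  rw [← mul_assoc, y_z2_pow, smul_mul_assoc, mul_assoc]

lemma z1_x_pow' (i : ℕ) (w : WeylAlg k q) : Wz1 k q * (Wx k q ^ i * w) =
    u q (-(i : ℤ)) • (Wx k q ^ i * (Wz1 k q * w)) := by
  rw [← mul_assoc, z1_x_pow, smul_mul_assoc, mul_assoc]

lemma z1_z2_pow' (j : ℕ) (w : WeylAlg k q) : Wz1 k q * (Wz2 k q ^ j * w) =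
    Wz2 k q ^ j * (Wz1 k q * w) := by
  rw [← mul_assoc, z1_z2_pow, mul_assoc]

lemma core (i j m : ℕ) :
    (Wx k q + Wy k q + Wz1 k q) * (Wx k q ^ i * Wz2 k q ^ j * Wz1 k q ^ m) -
      (Wx k q ^ (i + 1) * Wz2 k q ^ j * Wz1 k q ^ m +
        E q i • (Wx k q ^ (i - 1) * Wz2 k q ^ (j + 1) * Wz1 k q ^ m) +
        u q (-(i : ℤ)) • (Wx k q ^ i * Wz2 k q ^ j * Wz1 k q ^ (m + 1))) ∈ I k q := by
  have hX : Wx k q * (Wx k q ^ i * Wz2 k q ^ j * Wz1 k q ^ m) =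
      Wx k q ^ (i + 1) * Wz2 k q ^ j * Wz1 k q ^ m := by
    rw [← mul_assoc, ← mul_assoc, ← pow_succ']
  have hZ : Wz1 k q * (Wx k q ^ i * Wz2 k q ^ j * Wz1 k q ^ m) =
      u q (-(i : ℤ)) • (Wx k q ^ i * Wz2 k q ^ j * Wz1 k q ^ (m + 1)) := by
    rw [mul_assoc, z1_x_pow', z1_z2_pow', ← pow_succ', ← mul_assoc]
  have hY : Wy k q * (Wx k q ^ i * Wz2 k q ^ j * Wz1 k q ^ m) =
      (u q (-(i : ℤ)) * (u q (-(2 * j : ℤ)) * u q (-(m : ℤ)))) •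
          (Wx k q ^ i * (Wz2 k q ^ j * (Wz1 k q ^ m * Wy k q))) +
        E q i • (Wx k q ^ (i - 1) * Wz2 k q ^ (j + 1) * Wz1 k q ^ m) := by
    rw [mul_assoc, y_x_pow' q i]
    congr 1
    · simp only [y_z2_pow', y_z1_pow, mul_smul_comm, smul_smul, mul_assoc]
    · rw [← mul_assoc (Wz2 k q), ← pow_succ', ← mul_assoc]
  rw [add_mul, add_mul, hX, hY, hZ]
  have key : Wx k q ^ (i + 1) * Wz2 k q ^ j * Wz1 k q ^ m +
        ((u q (-(i : ℤ)) * (u q (-(2 * j : ℤ)) * u q (-(m : ℤ)))) •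
            (Wx k q ^ i * (Wz2 k q ^ j * (Wz1 k q ^ m * Wy k q))) +
          E q i • (Wx k q ^ (i - 1) * Wz2 k q ^ (j + 1) * Wz1 k q ^ m)) +
        u q (-(i : ℤ)) • (Wx k q ^ i * Wz2 k q ^ j * Wz1 k q ^ (m + 1)) -
      (Wx k q ^ (i + 1) * Wz2 k q ^ j * Wz1 k q ^ m +
        E q i • (Wx k q ^ (i - 1) * Wz2 k q ^ (j + 1) * Wz1 k q ^ m) +
        u q (-(i : ℤ)) • (Wx k q ^ i * Wz2 k q ^ j * Wz1 k q ^ (m + 1))) =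
      (u q (-(i : ℤ)) * (u q (-(2 * j : ℤ)) * u q (-(m : ℤ)))) •
          (Wx k q ^ i * (Wz2 k q ^ j * (Wz1 k q ^ m * Wy k q))) := by
    abel
  rw [key]
  refine smul_mem_I q _ ?_
  exact Ideal.mul_mem_left _ _ (Ideal.mul_mem_left _ _ (mul_Wy_mem q _))

lemma two_dvd_tri (a : ℕ) : 2 ∣ a * (a - 1) := by
  cases a with
  | zero => simp
  | succ b =>
      have h : Even (b * (b + 1)) := Nat.even_mul_succ_self b
      rw [Nat.succ_sub_one, mul_comm]
      exact h.two_dvd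

lemma cast_half (a : ℕ) (h : 2 ∣ a) : 2 * ((a / 2 : ℕ) : ℤ) = (a : ℤ) := by omega

lemma two_βe (n i j : ℕ) : 2 * βe n i j =
    (n : ℤ) * ((n : ℤ) + 1) + 2 * (j : ℤ) + (i : ℤ) * ((i : ℤ) - 1) - 2 * (n : ℤ) * (i : ℤ) := by
  have h1 : 2 * ((n * (n + 1) / 2 : ℕ) : ℤ) = (n : ℤ) * ((n : ℤ) + 1) := by
    rw [cast_half _ (Nat.even_mul_succ_self n).two_dvd]
    push_cast
    ring
  have h2 : 2 * ((i * (i - 1) / 2 : ℕ) : ℤ) = (i : ℤ) * ((i : ℤ) - 1) := by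
    rw [cast_half _ (two_dvd_tri i)]
    cases i with
    | zero => simp
    | succ b => push_cast [Nat.succ_sub_one]; ring
  rw [βe]
  linear_combination h1 + h2

lemma βe1 (n i j : ℕ) : βe (n + 1) (i + 1) j = βe n i j := by
  refine mul_left_cancel₀ (by norm_num : (2 : ℤ) ≠ 0) ?_
  rw [two_βe, two_βe]
  push_cast
  ring

lemma βe3 (n i j : ℕ) : βe (n + 1) i j = βe n i j + ((n : ℤ) + 1 - (i : ℤ)) := by
  refine mul_left_cancel₀ (by norm_num : (2 : ℤ) ≠ 0) ?_
  rw [mul_add, two_βe, two_βe]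
  push_cast
  ring

lemma βe2 (n i j : ℕ) (h : 1 ≤ i) :
    βe (n + 1) (i - 1) (j + 1) = βe n i j + (2 * (n : ℤ) + 4 - 2 * (i : ℤ)) := by
  have hc : ((i - 1 : ℕ) : ℤ) = (i : ℤ) - 1 := by omega
  refine mul_left_cancel₀ (by norm_num : (2 : ℤ) ≠ 0) ?_
  rw [mul_add, two_βe, two_βe, hc]
  push_cast
  ring

end WeylAux
end

noncomputable section
namespace WeylAux
open Polynomial
variable {k : Type*} [Field k] (q : kˣ)

lemma mono_step (n i j : ℕ) (hij : i + 2 * j ≤ n) (c : k) :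
    (Wx k q + Wy k q + Wz1 k q) * Θ q n (monomial i (monomial j c)) -
      Θ q (n + 1) (stepQ q n (monomial i (monomial j c))) ∈ I k q := by
  rw [stepQ_monomial, Θ_add, Θ_add, Θ_monomial, Θ_monomial, Θ_monomial, Θ_monomial]
  have hMn : Mn q n i j =
      Wx k q ^ i * Wz2 k q ^ j * Wz1 k q ^ (n - (i + 2 * j)) := rfl
  have heA : n + 1 - (i + 1 + 2 * j) = n - (i + 2 * j) := by omega
  have hA : Mn q (n + 1) (i + 1) j =
      Wx k q ^ (i + 1) * Wz2 k q ^ j * Wz1 k q ^ (n - (i + 2 * j)) := by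
    rw [Mn, heA]
  have heC : n + 1 - (i + 2 * j) = n - (i + 2 * j) + 1 := by omega
  have hC : Mn q (n + 1) i j =
      Wx k q ^ i * Wz2 k q ^ j * Wz1 k q ^ (n - (i + 2 * j) + 1) := by
    rw [Mn, heC]
  have hB : ((((q⁻¹ : kˣ) : k) ^ (2 * (n + 1)) * (c * ∑ s ∈ Finset.range i, (q : k) ^ s)) *
        u q (βe (n + 1) (i - 1) (j + 1))) • Mn q (n + 1) (i - 1) (j + 1) =
      ((c * u q (βe n i j)) * E q i) •
        (Wx k q ^ (i - 1) * Wz2 k q ^ (j + 1) * Wz1 k q ^ (n - (i + 2 * j))) := by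
    rcases Nat.eq_zero_or_pos i with h0 | hpos
    · subst h0
      simp [E_zero]
    · have he : n + 1 - (i - 1 + 2 * (j + 1)) = n - (i + 2 * j) := by omega
      rw [Mn, he]
      congr 1
      rw [βe2 n i j hpos,
        show (((q⁻¹ : kˣ) : k) ^ (2 * (n + 1))) = u q (-((2 * (n + 1) : ℕ) : ℤ)) from
          (u_neg_natCast q _).symm, E]
      rw [Finset.mul_sum, Finset.mul_sum, Finset.sum_mul, Finset.mul_sum]
      refine Finset.sum_congr rfl fun s _ => ?_
      have h : u q (-((2 * (n + 1) : ℕ) : ℤ)) * ((q : k) ^ s *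
          u q (βe n i j + (2 * (n : ℤ) + 4 - 2 * (i : ℤ)))) =
          u q (βe n i j) * u q ((s : ℤ) + 2 - 2 * (i : ℤ)) := by
        rw [← u_natCast q s, ← u_add, ← u_add, ← u_add]
        congr 1
        push_cast
        ring
      linear_combination c * h
  have hs3 : ((((q⁻¹ : kˣ) : k) ^ (n + 1)) * c) * u q (βe (n + 1) i j) =
      (c * u q (βe n i j)) * u q (-(i : ℤ)) := by
    have h : u q (-(((n + 1) : ℕ) : ℤ)) * u q (βe n i j + ((n : ℤ) + 1 - (i : ℤ))) =
        u q (βe n i j) * u q (-(i : ℤ)) := by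
      rw [← u_add, ← u_add]
      congr 1
      push_cast
      ring
    rw [show (((q⁻¹ : kˣ) : k) ^ (n + 1)) = u q (-(((n + 1) : ℕ) : ℤ)) from
      (u_neg_natCast q _).symm, βe3]
    linear_combination c * h
  rw [hA, hC, hB, hs3, βe1, hMn]
  have hcore := smul_mem_I q (c * u q (βe n i j)) (core q i j (n - (i + 2 * j)))
  rw [smul_sub, smul_add, smul_add, smul_smul, smul_smul] at hcore
  rw [mul_smul_comm]
  exact hcore

end WeylAux
end

noncomputable section
namespace WeylAux
open Polynomial
variable {k : Type*} [Field k] (q : kˣ)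

lemma coeff_X_mul' {R : Type*} [Semiring R] (p : Polynomial R) (i : ℕ) :
    (Polynomial.X * p).coeff i = if i = 0 then 0 else p.coeff (i - 1) := by
  rcases i with _ | i
  · simp [Polynomial.mul_coeff_zero]
  · simp [Polynomial.coeff_X_mul]

lemma qDeriv2_coeff (p : Polynomial (Polynomial k)) (i : ℕ) :
    (qDeriv2 k (q : k) p).coeff i =
      p.coeff (i + 1) * Polynomial.C (∑ s ∈ Finset.range (i + 1), (q : k) ^ s) := by
  rw [qDeriv2, Polynomial.sum_def, Polynomial.finset_sum_coeff]
  have step : ∀ e ∈ p.support,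
      (Polynomial.C (p.coeff e * Polynomial.C (∑ s ∈ Finset.range e, (q : k) ^ s)) *
        Polynomial.X ^ (e - 1)).coeff i =
      if e = i + 1 then p.coeff e * Polynomial.C (∑ s ∈ Finset.range e, (q : k) ^ s) else 0 := by
    intro e _
    rw [Polynomial.coeff_C_mul, Polynomial.coeff_X_pow]
    rcases e with _ | e
    · simp
    · simp only [Nat.succ_sub_one]
      by_cases h : i = e
      · subst h
        simp
      · rw [if_neg h, if_neg (by omega), mul_zero]
  rw [Finset.sum_congr rfl step, Finset.sum_ite_eq' p.support (i + 1)]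
  by_cases h : i + 1 ∈ p.support
  · rw [if_pos h]
  · rw [if_neg h, Polynomial.notMem_support_iff.mp h, zero_mul]

lemma supp_pseq2 (n i j : ℕ) (h : n < i + 2 * j) : ((pseq2 k q n).coeff i).coeff j = 0 := by
  induction n generalizing i j with
  | zero =>
      show ((1 : Polynomial (Polynomial k)).coeff i).coeff j = 0
      rw [Polynomial.coeff_one]
      rcases Nat.eq_zero_or_pos i with h0 | hpos
      · subst h0
        rw [if_pos rfl, Polynomial.coeff_one, if_neg (by omega)]
      · rw [if_neg (by omega)]
        simp
  | succ n ih =>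
      rw [pseq2_succ, stepQ]
      simp only [Polynomial.coeff_add]
      have t1 : ((Polynomial.X * pseq2 k q n).coeff i).coeff j = 0 := by
        rw [coeff_X_mul']
        rcases Nat.eq_zero_or_pos i with h0 | hpos
        · rw [if_pos h0]
          simp
        · rw [if_neg (by omega)]
          exact ih (i - 1) j (by omega)
      have t2 : ((Polynomial.C ((((q⁻¹ : kˣ) : k) ^ (2 * (n + 1))) • (Polynomial.X : Polynomial k)) *
          qDeriv2 k (q : k) (pseq2 k q n)).coeff i).coeff j = 0 := by
        rw [Polynomial.coeff_C_mul, smul_mul_assoc, Polynomial.coeff_smul, coeff_X_mul',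
          qDeriv2_coeff, smul_eq_mul]
        rcases Nat.eq_zero_or_pos j with h0 | hpos
        · rw [if_pos h0, mul_zero]
        · rw [if_neg (by omega), Polynomial.coeff_mul_C,
            ih (i + 1) (j - 1) (by omega), zero_mul, mul_zero]
      have t3 : ((Polynomial.C (Polynomial.C (((q⁻¹ : kˣ) : k) ^ (n + 1))) *
          pseq2 k q n).coeff i).coeff j = 0 := by
        rw [Polynomial.coeff_C_mul, Polynomial.coeff_C_mul, ih i j (by omega), mul_zero]
      rw [t1, t2, t3]
      norm_num

lemma qDeriv2_add (p r : Polynomial (Polynomial k)) :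
    qDeriv2 k (q : k) (p + r) = qDeriv2 k (q : k) p + qDeriv2 k (q : k) r := by
  refine Polynomial.sum_add_index p r _ (fun e => by simp) ?_
  intro e b₁ b₂
  rw [add_mul, map_add, add_mul]

lemma stepQ_add (n : ℕ) (p r : Polynomial (Polynomial k)) :
    stepQ q n (p + r) = stepQ q n p + stepQ q n r := by
  rw [stepQ, stepQ, stepQ, qDeriv2_add]
  ring

lemma step_mem (n : ℕ) (p : Polynomial (Polynomial k))
    (hp : ∀ i j, ((p.coeff i).coeff j) ≠ 0 → i + 2 * j ≤ n) :
    (Wx k q + Wy k q + Wz1 k q) * Θ q n p - Θ q (n + 1) (stepQ q n p) ∈ I k q := by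
  classical
  have hdec : p = ∑ x ∈ p.support.sigma (fun i => (p.coeff i).support),
      monomial x.1 (monomial x.2 ((p.coeff x.1).coeff x.2)) := by
    rw [Finset.sum_sigma]
    conv_lhs => rw [p.as_sum_support]
    refine Finset.sum_congr rfl fun i _ => ?_
    conv_lhs => rw [(p.coeff i).as_sum_support]
    exact map_sum (monomial i) _ _
  have hsum : ∀ (N : ℕ) (r : Polynomial (Polynomial k)) (S : Finset (Σ _ : ℕ, ℕ))
      (f : (Σ _ : ℕ, ℕ) → Polynomial (Polynomial k)),
      Θ q N (∑ x ∈ S, f x) = ∑ x ∈ S, Θ q N (f x) :=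
    fun N _ S f => map_sum (AddMonoidHom.mk' (Θ q N) (Θ_add q N)) f S
  have hstepsum : ∀ (S : Finset (Σ _ : ℕ, ℕ)) (f : (Σ _ : ℕ, ℕ) → Polynomial (Polynomial k)),
      stepQ q n (∑ x ∈ S, f x) = ∑ x ∈ S, stepQ q n (f x) :=
    fun S f => map_sum (AddMonoidHom.mk' (stepQ q n) (stepQ_add q n)) f S
  have key : (Wx k q + Wy k q + Wz1 k q) * Θ q n p - Θ q (n + 1) (stepQ q n p) =
      ∑ x ∈ p.support.sigma (fun i => (p.coeff i).support),
        ((Wx k q + Wy k q + Wz1 k q) *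
            Θ q n (monomial x.1 (monomial x.2 ((p.coeff x.1).coeff x.2))) -
          Θ q (n + 1) (stepQ q n (monomial x.1 (monomial x.2 ((p.coeff x.1).coeff x.2))))) := by
    conv_lhs => rw [hdec]
    rw [hsum n p, hstepsum, hsum (n + 1) p, Finset.mul_sum, Finset.sum_sub_distrib]
  rw [key]
  refine Submodule.sum_mem _ fun x hx => ?_
  rw [Finset.mem_sigma] at hx
  exact mono_step q n x.1 x.2 (hp x.1 x.2 (Polynomial.mem_support_iff.mp hx.2)) _

lemma main (n : ℕ) :
    (Wx k q + Wy k q + Wz1 k q) ^ n - Θ q n (pseq2 k q n) ∈ I k q := by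
  induction n with
  | zero =>
      have h1 : pseq2 k q 0 = monomial 0 (monomial 0 (1 : k)) := by
        show (1 : Polynomial (Polynomial k)) = _
        simp
      rw [pow_zero, h1, Θ_monomial]
      have h2 : ((1 : k) * u q (βe 0 0 0)) • Mn q 0 0 0 = 1 := by
        rw [one_mul, Mn]
        simp [βe, u]
      rw [h2, sub_self]
      exact zero_mem _
  | succ n ih =>
      have h1 : (Wx k q + Wy k q + Wz1 k q) ^ (n + 1) -
          (Wx k q + Wy k q + Wz1 k q) * Θ q n (pseq2 k q n) ∈ I k q := by
        rw [pow_succ', ← mul_sub]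
        exact Ideal.mul_mem_left _ _ ih
      have h2 := step_mem q n (pseq2 k q n) (fun i j hne => by
        by_contra hc
        exact hne (supp_pseq2 q n i j (by omega)))
      have h3 := Submodule.add_mem _ h1 h2
      rw [sub_add_sub_cancel] at h3
      rw [pseq2_succ]
      exact h3

end WeylAux
end

/-- In the quantum Weyl algebra `A₁^q`, the element
`(X+Y+Z₁)ⁿ − q^{n(n+1)/2} Σ_{i+2j ≤ n} c^{(n)}_{ij} q^{j+i(i−1)/2−ni} Xⁱ Z₂ʲ Z₁^{n−i−2j}`
lies in the left ideal generated by `Y`, where `c^{(n)}_{ij}` is the coefficient of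
`xⁱzʲ` in the polynomial `p_n`. -/
theorem weyl_power_mod_leftIdeal {k : Type*} [Field k] (q : kˣ) (n : ℕ) :
    (Wx k q + Wy k q + Wz1 k q) ^ n -
      (q : k) ^ (n * (n + 1) / 2) •
        ∑ p ∈ (Finset.range (n + 1) ×ˢ Finset.range (n + 1)).filter
            (fun p => p.1 + 2 * p.2 ≤ n),
          (((pseq2 k q n).coeff p.1).coeff p.2 *
              ((q ^ ((p.2 : ℤ) + ((p.1 * (p.1 - 1) / 2 : ℕ) : ℤ) - (n : ℤ) * (p.1 : ℤ)) : kˣ) : k)) •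
            (Wx k q ^ p.1 * Wz2 k q ^ p.2 * Wz1 k q ^ (n - p.1 - 2 * p.2))
      ∈ Ideal.span {Wy k q} := by
  classical
  have houter : ∀ i, n < i → (pseq2 k q n).coeff i = 0 := fun i hi =>
    Polynomial.ext fun j => WeylAux.supp_pseq2 q n i j (by omega)
  have hsupp1 : (pseq2 k q n).support ⊆ Finset.range (n + 1) := fun i hi => by
    rw [Finset.mem_range]
    by_contra hc
    exact Polynomial.mem_support_iff.mp hi (houter i (by omega))
  have hsupp2 : ∀ i, ((pseq2 k q n).coeff i).support ⊆ Finset.range (n + 1) := fun i j hj => by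
    rw [Finset.mem_range]
    by_contra hc
    exact Polynomial.mem_support_iff.mp hj (WeylAux.supp_pseq2 q n i j (by omega))
  have h1 : WeylAux.Θ q n (pseq2 k q n) =
      ∑ x ∈ Finset.range (n + 1) ×ˢ Finset.range (n + 1),
        ((((pseq2 k q n).coeff x.1).coeff x.2) * WeylAux.u q (WeylAux.βe n x.1 x.2)) •
          WeylAux.Mn q n x.1 x.2 := by
    rw [Finset.sum_product, WeylAux.Θ, Polynomial.sum_def]
    refine (Finset.sum_subset hsupp1 fun i _ hi => ?_).trans (Finset.sum_congr rfl fun i _ => ?_)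
    · rw [Polynomial.notMem_support_iff.mp hi, Polynomial.sum_zero_index]
    · rw [Polynomial.sum_def]
      exact Finset.sum_subset (hsupp2 i) fun j _ hj => by
        rw [Polynomial.notMem_support_iff.mp hj, zero_mul, zero_smul]
  have heq : (q : k) ^ (n * (n + 1) / 2) •
      ∑ p ∈ (Finset.range (n + 1) ×ˢ Finset.range (n + 1)).filter
          (fun p => p.1 + 2 * p.2 ≤ n),
        (((pseq2 k q n).coeff p.1).coeff p.2 *
            ((q ^ ((p.2 : ℤ) + ((p.1 * (p.1 - 1) / 2 : ℕ) : ℤ) - (n : ℤ) * (p.1 : ℤ)) : kˣ) : k)) •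
          (Wx k q ^ p.1 * Wz2 k q ^ p.2 * Wz1 k q ^ (n - p.1 - 2 * p.2)) =
      WeylAux.Θ q n (pseq2 k q n) := by
    rw [Finset.sum_filter_of_ne (fun x _ hne => by
      by_contra hc
      exact hne (by rw [WeylAux.supp_pseq2 q n x.1 x.2 (by omega), zero_mul, zero_smul]))]
    rw [Finset.smul_sum, h1]
    refine Finset.sum_congr rfl fun x hx => ?_
    rw [smul_smul]
    congr 1
    · rw [show (q : k) ^ (n * (n + 1) / 2) = WeylAux.u q ((n * (n + 1) / 2 : ℕ) : ℤ) from
        (WeylAux.u_natCast q _).symm]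
      have hb : WeylAux.βe n x.1 x.2 = ((n * (n + 1) / 2 : ℕ) : ℤ) +
          ((x.2 : ℤ) + ((x.1 * (x.1 - 1) / 2 : ℕ) : ℤ) - (n : ℤ) * (x.1 : ℤ)) := by
        rw [WeylAux.βe]
        ring
      rw [hb, WeylAux.u_add]
      show WeylAux.u q _ * (_ * WeylAux.u q _) = _
      ring
    · rw [WeylAux.Mn, Nat.sub_sub]
  rw [heq]
  have hm := WeylAux.main q n
  simpa [WeylAux.I] using hm
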